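/- Let u : ℝ³ → ℍ be differentiable at x with |u(y)| = 1 for every y, and let φ : ℝ³ → ℍ be differentiable at x. Set ψ(y) = u(y)·φ(y)·u(y)* and a(v) = u(x)*·Du(x)v. Then for every v ∈ ℝ³: Dψ(x)v = u(x)·( Dφ(x)v + a(v)·φ(x) − φ(x)·a(v) )·u(x)*. (This is the pointwise identity dψ = u (D_a φ) u* with D_a φ = dφ + [a, φ], underlying the rewriting E(ψ) = E_φ[a] of the Faddeev energy.) -/

import Mathlib

open Quaternion

instance : StarModule ℝ ℍ[ℝ] :=
  ⟨fun r a => by ext <;> simp⟩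

/-- For `u : ℝ³ → ℍ` of unit norm and `φ : ℝ³ → ℍ`, both differentiable at `x`,
with `ψ = u φ u*` and `a(v) = u(x)* Du(x)v`, one has the pointwise identity
`Dψ(x)v = u(x)(Dφ(x)v + [a(v), φ(x)])u(x)*`, i.e. `dψ = u (D_a φ) u*`,
underlying the rewriting `E(ψ) = E_φ[a]` of the Faddeev energy. -/
theorem derivative_of_conjugated_map (u φ : EuclideanSpace ℝ (Fin 3) → ℍ[ℝ])
    (x : EuclideanSpace ℝ (Fin 3))
    (hu : DifferentiableAt ℝ u x) (hφ : DifferentiableAt ℝ φ x)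
    (h_unit : ∀ y, ‖u y‖ = 1)
    (v : EuclideanSpace ℝ (Fin 3)) :
    fderiv ℝ (fun y => u y * φ y * star (u y)) x v =
      u x * (fderiv ℝ φ x v
          + (star (u x) * fderiv ℝ u x v) * φ x
          - φ x * (star (u x) * fderiv ℝ u x v)) * star (u x) := by
  have hsu : DifferentiableAt ℝ (fun y => star (u y)) x := hu.star
  set p := u x with hp
  set q := star (u x) with hq
  set c := fderiv ℝ u x v with hc
  set d := fderiv ℝ φ x v with hd
  have hunit : ∀ y, u y * star (u y) = 1 := by
    intro y
    rw [Quaternion.self_mul_star, Quaternion.normSq_eq_norm_mul_self, h_unit y]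
    norm_num
  have hpq : p * q = 1 := hunit x
  have hqp : q * p = 1 := by
    rw [hp, hq, Quaternion.star_mul_self, Quaternion.normSq_eq_norm_mul_self, h_unit x]
    norm_num
  -- derivative of star u
  have hstar : fderiv ℝ (fun y => star (u y)) x v = star c := by
    rw [fderiv_star]; rfl
  -- differentiate the constant u * star u = 1
  have hconst : fderiv ℝ (fun y => u y * star (u y)) x = 0 := by
    have : (fun y => u y * star (u y)) = fun _ => (1 : ℍ[ℝ]) := funext hunit
    rw [this, fderiv_fun_const]
    rfl
  have hzero : p * star c + c * q = 0 := by
    have := congrArg (fun L => L v) (fderiv_fun_mul' hu hsu)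
    simp only [hconst] at this
    simp only [ContinuousLinearMap.zero_apply, ContinuousLinearMap.add_apply,
      ContinuousLinearMap.smul_apply, ContinuousLinearMap.smulRight_apply, smul_eq_mul,
      op_smul_eq_mul, hstar] at this
    rw [← this]
  have hsc : star c = -(q * (c * q)) := by
    have h := congrArg (fun z => q * z) hzero
    simp only [mul_add, mul_zero] at h
    rw [← mul_assoc, hqp, one_mul] at h
    have := eq_neg_of_add_eq_zero_left h
    rw [this]
  -- expand the derivative of the triple product
  have hmul1 : fderiv ℝ (fun y => u y * φ y) x v = p * d + c * φ x := by
    rw [fderiv_fun_mul' hu hφ]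
    simp [smul_eq_mul]
    rfl
  have hmain : fderiv ℝ (fun y => u y * φ y * star (u y)) x v
      = (p * φ x) * star c + (p * d + c * φ x) * q := by
    rw [fderiv_fun_mul' (a := fun y => u y * φ y) (hu.mul hφ) hsu]
    simp only [ContinuousLinearMap.add_apply, ContinuousLinearMap.smul_apply,
      ContinuousLinearMap.smulRight_apply, smul_eq_mul, op_smul_eq_mul, hstar, hmul1]
    rfl
  rw [hmain, hsc]
  have h1 : p * q * (c * (φ x * q)) = c * (φ x * q) := by rw [hpq, one_mul]
  simp only [mul_add, add_mul, mul_sub, sub_mul, mul_neg, neg_mul, mul_assoc]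
  rw [← mul_assoc p q, hpq, one_mul]
  abel
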